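/- Let Φ = {φ₁,…,φ_k} be an IFS and a ∈ Ω_k. Then the set of δ ∈ ℝ such that the pair (Φ, a+δ) has a singular connection is countable. -/

import Mathlib

open Filter Set Topology
open scoped NNReal

noncomputable def pcIdx {k : ℕ} (hk : 2 ≤ k) (a : Fin (k-1) → ℝ) (x : ℝ) : Fin k :=
  ⟨(Finset.univ.filter fun i => a i ≤ x).card, by
    have h := Finset.card_filter_le (Finset.univ : Finset (Fin (k-1))) (fun i => a i ≤ x)
    simp only [Finset.card_univ, Fintype.card_fin] at h
    omega⟩

/-- The piecewise contraction `f_{Φ,a}` determined by the IFS `φ` and partition points `a`. -/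
noncomputable def pc {k : ℕ} (hk : 2 ≤ k) (φ : Fin k → ℝ → ℝ) (a : Fin (k-1) → ℝ) (x : ℝ) : ℝ :=
  φ (pcIdx hk a x) x

/-- `φ_ω = φ_{ω_n} ∘ ⋯ ∘ φ_{ω_1}`. -/
def wcomp {k : ℕ} (φ : Fin k → ℝ → ℝ) {n : ℕ} (ω : Fin n → Fin k) (x : ℝ) : ℝ :=
  (List.ofFn ω).foldl (fun y i => φ i y) x

/-- `(Φ,a)` has a singular connection: `φ_ω(S_a) ∩ S_a ≠ ∅` for some nonempty word `ω`. -/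
def hasSingConn {k : ℕ} (φ : Fin k → ℝ → ℝ) (a : Fin (k-1) → ℝ) : Prop :=
  ∃ n : ℕ, ∃ ω : Fin (n+1) → Fin k, ∃ i j : Fin (k-1), wcomp φ ω (a i) = a j

/-- `max_i |z i|`. -/
noncomputable def maxAbs {k : ℕ} (hk : 2 ≤ k) (z : Fin k → ℝ) : ℝ :=
  Finset.univ.sup' (Finset.univ_nonempty_iff.mpr ⟨⟨0, by omega⟩⟩) fun i => |z i|

/-- The set of itineraries of order `n` of `(Φ,a)`. -/
noncomputable def itin {k : ℕ} (hk : 2 ≤ k) (φ : Fin k → ℝ → ℝ) (a : Fin (k-1) → ℝ) (n : ℕ) :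
    Set (Fin n → Fin k) :=
  {ω | ∃ x : ℝ, (∀ j < n, (pc hk φ a)^[j] x ∉ Set.range a) ∧
       ∀ j : Fin n, ω j = pcIdx hk a ((pc hk φ a)^[(j : ℕ)] x)}

/-- `I^{(n)}_{Φ,a}(ε) = ⋃_{|δ| ≤ ε} I^{(n)}_{Φ,a+δ}`. -/
noncomputable def itinE {k : ℕ} (hk : 2 ≤ k) (φ : Fin k → ℝ → ℝ) (a : Fin (k-1) → ℝ)
    (ε : ℝ) (n : ℕ) : Set (Fin n → Fin k) :=
  {ω | ∃ δ : ℝ, |δ| ≤ ε ∧ ω ∈ itin hk φ (fun i => a i + δ) n}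

/-- `Ω^ε_{Φ,a} = ⋂_{m ≥ 1} closure (⋃_{n ≥ m} ⋃_{ω ∈ I^{(n)}(ε)} {φ_ω(0)})`. -/
noncomputable def omegaSet {k : ℕ} (hk : 2 ≤ k) (φ : Fin k → ℝ → ℝ) (a : Fin (k-1) → ℝ)
    (ε : ℝ) : Set ℝ :=
  ⋂ m : ℕ, closure {y : ℝ | ∃ n, m ≤ n ∧ ∃ ω ∈ itinE hk φ a ε n, wcomp φ ω 0 = y}

/-- The ω-limit set of `x` under `f`. -/
def omegaLimitPt (f : ℝ → ℝ) (x : ℝ) : Set ℝ :=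
  {y | MapClusterPt y Filter.atTop fun n => f^[n] x}

/-- `f` is asymptotically periodic. -/
def AsympPeriodic (f : ℝ → ℝ) : Prop :=
  {x : ℝ | ∃ p : ℕ, 1 ≤ p ∧ f^[p] x = x}.Finite ∧
  ∀ x : ℝ, ∃ z : ℝ, ∃ p : ℕ, 1 ≤ p ∧ f^[p] z = z ∧
    omegaLimitPt f x = Set.range fun j : Fin p => f^[(j : ℕ)] z

/-- `f` is asymptotically periodic on the invariant set `s`. -/
def AsympPeriodicOn (f : ℝ → ℝ) (s : Set ℝ) : Prop :=
  {x ∈ s | ∃ p : ℕ, 1 ≤ p ∧ f^[p] x = x}.Finite ∧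
  ∀ x ∈ s, ∃ z : ℝ, ∃ p : ℕ, 1 ≤ p ∧ f^[p] z = z ∧
    omegaLimitPt f x = Set.range fun j : Fin p => f^[(j : ℕ)] z


lemma lip_foldl {k : ℕ} (φ : Fin k → ℝ → ℝ) (lam : ℝ≥0)
    (hlip : ∀ i, LipschitzWith lam (φ i)) (l : List (Fin k)) :
    LipschitzWith (lam ^ l.length) (fun x => l.foldl (fun y i => φ i y) x) := by
  induction l with
  | nil => simp only [List.length_nil, pow_zero, List.foldl_nil]; exact LipschitzWith.id
  | cons i l ih =>
    have : (fun x => (i :: l).foldl (fun y i => φ i y) x)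
        = (fun x => l.foldl (fun y i => φ i y) x) ∘ (φ i) := rfl
    rw [this]
    have := ih.comp (hlip i)
    simpa [pow_succ, mul_comm] using this

lemma lip_wcomp {k : ℕ} (φ : Fin k → ℝ → ℝ) (lam : ℝ≥0) (hlam : lam < 1)
    (hlip : ∀ i, LipschitzWith lam (φ i)) {n : ℕ} (ω : Fin (n+1) → Fin k) :
    LipschitzWith lam (wcomp φ ω) := by
  have h := lip_foldl φ lam hlip (List.ofFn ω)
  have hle : lam ^ (List.ofFn ω).length ≤ lam := by
    rw [List.length_ofFn, pow_succ]
    calc lam ^ n * lam ≤ 1 * lam := by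
          gcongr
          exact pow_le_one₀ zero_le hlam.le
      _ = lam := one_mul lam
  exact (h.weaken hle)

theorem stmt6 {k : ℕ} (hk : 2 ≤ k) (φ : Fin k → ℝ → ℝ) (lam : ℝ≥0) (hlam : lam < 1)
    (hlip : ∀ i, LipschitzWith lam (φ i))
    (a : Fin (k-1) → ℝ) (ha : StrictMono a) :
    Set.Countable {δ : ℝ | hasSingConn φ (fun i => a i + δ)} := by
  have hsub : {δ : ℝ | hasSingConn φ (fun i => a i + δ)} ⊆
      ⋃ p : (Σ n : ℕ, (Fin (n+1) → Fin k)) × (Fin (k-1) × Fin (k-1)),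
        {δ : ℝ | wcomp φ p.1.2 (a p.2.1 + δ) = a p.2.2 + δ} := by
    rintro δ ⟨n, ω, i, j, h⟩
    exact Set.mem_iUnion.2 ⟨(⟨n, ω⟩, i, j), h⟩
  refine Set.Countable.mono hsub (Set.countable_iUnion fun p => ?_)
  obtain ⟨⟨n, ω⟩, i, j⟩ := p
  apply Set.Subsingleton.countable
  intro δ₁ h₁ δ₂ h₂
  simp only [Set.mem_setOf_eq] at h₁ h₂
  have hl := (lip_wcomp φ lam hlam hlip ω).dist_le_mul (a i + δ₁) (a i + δ₂)
  have hd : dist (wcomp φ ω (a i + δ₁)) (wcomp φ ω (a i + δ₂)) = dist δ₁ δ₂ := by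
    rw [h₁, h₂, Real.dist_eq, Real.dist_eq]
    ring_nf
  have hd2 : dist (a i + δ₁) (a i + δ₂) = dist δ₁ δ₂ := by
    rw [Real.dist_eq, Real.dist_eq]; ring_nf
  rw [hd, hd2] at hl
  by_contra hne
  have hpos : 0 < dist δ₁ δ₂ := dist_pos.2 hne
  have : (lam : ℝ) * dist δ₁ δ₂ < 1 * dist δ₁ δ₂ := by
    apply mul_lt_mul_of_pos_right _ hpos
    exact_mod_cast hlam
  linarith
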